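/- Let d ≥ 2, k > p ≥ 1 and χ_1 ≥ ⋯ ≥ χ_k reals satisfying the de Thélin bound (k−p) log d ≤ (a−1) log d + 2 Σ_{i=a}^k max(χ_i,0) for all admissible a (indices where a = 1 or χ_{a-1} > χ_a). Then at least k−p of the χ_i are strictly positive; and if exactly k−p are positive, each positive exponent is ≥ (log d)/2. -/
import Mathlib


open Finset

/-- If `χ₁ ≥ ⋯ ≥ χ_k` satisfy the de Thélin bound
`(k−p) log d ≤ (a−1) log d + 2 Σ_{i=a}^k χᵢ⁺` at every admissible index `a`, then at
least `k−p` of the `χᵢ` are strictly positive; and if exactly `k−p` are positive, then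
every positive exponent is at least `(log d)/2`. -/
theorem lyapunov_positive_count (d k p : ℕ) (hd : 2 ≤ d) (hp : 1 ≤ p) (hpk : p < k)
    (χ : ℕ → ℝ) (hmono : ∀ i j : ℕ, 1 ≤ i → i ≤ j → j ≤ k → χ j ≤ χ i)
    (hdT : ∀ a : ℕ, 1 ≤ a → a ≤ k → (a = 1 ∨ χ a < χ (a - 1)) →
      ((k : ℝ) - p) * Real.log d ≤
        ((a : ℝ) - 1) * Real.log d + 2 * ∑ i ∈ Finset.Icc a k, max (χ i) 0) :
    k - p ≤ ((Finset.Icc 1 k).filter fun i => 0 < χ i).card ∧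
    (((Finset.Icc 1 k).filter fun i => 0 < χ i).card = k - p →
      ∀ i : ℕ, 1 ≤ i → i ≤ k → 0 < χ i → Real.log d / 2 ≤ χ i) := by
  have hL : 0 < Real.log d := Real.log_pos (by
    have : (2:ℝ) ≤ d := by exact_mod_cast hd
    linarith)
  set S : Finset ℕ := (Finset.Icc 1 k).filter fun i => 0 < χ i with hS
  set c : ℕ := S.card with hc
  have hck : c ≤ k := by
    have := Finset.card_le_card (Finset.filter_subset (fun i => 0 < χ i) (Finset.Icc 1 k))
    simpa [Nat.card_Icc, ← hS, ← hc] using this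
  have hmemS : ∀ i, i ∈ S ↔ (1 ≤ i ∧ i ≤ k ∧ 0 < χ i) := by
    intro i; simp [hS, Finset.mem_filter, Finset.mem_Icc, and_assoc]
  have hdown : ∀ i j, 1 ≤ i → i ≤ j → j ∈ S → i ∈ S := by
    intro i j hi hij hj
    rw [hmemS] at hj ⊢
    exact ⟨hi, le_trans hij hj.2.1, lt_of_lt_of_le hj.2.2 (hmono i j hi hij hj.2.1)⟩
  have hSeq : S = Finset.Icc 1 c := by
    have hsub : Finset.Icc 1 c ⊆ S := by
      intro i hi
      rw [Finset.mem_Icc] at hi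
      by_contra hiS
      have hSsub : S ⊆ Finset.Icc 1 (i - 1) := by
        intro j hj
        have hj' := (hmemS j).1 hj
        rw [Finset.mem_Icc]
        refine ⟨hj'.1, ?_⟩
        by_contra hji
        push_neg at hji
        exact hiS (hdown i j hi.1 (by omega) hj)
      have := Finset.card_le_card hSsub
      rw [Nat.card_Icc] at this
      omega
    have hcI : (Finset.Icc 1 c).card = c := by simp [Nat.card_Icc]
    exact (Finset.eq_of_subset_of_card_le hsub (by rw [hcI, ← hc])).symm
  have hpos : ∀ i, 1 ≤ i → i ≤ c → 0 < χ i := fun i h1 h2 =>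
    ((hmemS i).1 (hSeq ▸ Finset.mem_Icc.mpr ⟨h1, h2⟩)).2.2
  have hnonpos : ∀ i, c < i → i ≤ k → χ i ≤ 0 := by
    intro i hci hik
    by_contra h
    push_neg at h
    have : i ∈ S := (hmemS i).2 ⟨by omega, hik, h⟩
    rw [hSeq, Finset.mem_Icc] at this; omega
  have hcard1 : k - p ≤ c := by
    by_cases hkc : k ≤ c
    · omega
    push_neg at hkc
    have hadm : (c + 1 = 1 ∨ χ (c+1) < χ ((c+1) - 1)) := by
      rcases Nat.eq_zero_or_pos c with h0 | h0
      · left; omega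
      · right
        simp only [Nat.add_sub_cancel]
        exact lt_of_le_of_lt (hnonpos (c+1) (by omega) (by omega)) (hpos c h0 le_rfl)
    have hb := hdT (c+1) (by omega) (by omega) hadm
    have hsum0 : ∑ i ∈ Finset.Icc (c+1) k, max (χ i) 0 = 0 := by
      apply Finset.sum_eq_zero
      intro i hi
      rw [Finset.mem_Icc] at hi
      exact max_eq_right (hnonpos i (by omega) hi.2)
    rw [hsum0] at hb
    have h1 : ((k:ℝ) - p) * Real.log d ≤ (c:ℝ) * Real.log d := by
      push_cast at hb; linarith
    have h2 : ((k:ℝ) - p) ≤ c := le_of_mul_le_mul_right h1 hL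
    have h3 : (k:ℝ) ≤ c + p := by linarith
    have h4 : k ≤ c + p := by exact_mod_cast h3
    omega
  refine ⟨hcard1, ?_⟩
  intro hceq i h1i hik hχi
  have hiS : i ∈ S := (hmemS i).2 ⟨h1i, hik, hχi⟩
  have hic : i ≤ c := by rw [hSeq, Finset.mem_Icc] at hiS; exact hiS.2
  have hc1 : 1 ≤ c := by omega
  set T : Finset ℕ := (Finset.Icc 1 c).filter fun j => χ j = χ c with hT
  have hcT : c ∈ T := by simp [hT, Finset.mem_filter, Finset.mem_Icc, hc1]
  have hTne : T.Nonempty := ⟨c, hcT⟩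
  set a := T.min' hTne with ha
  have haT : a ∈ T := T.min'_mem hTne
  have haT' : (1 ≤ a ∧ a ≤ c) ∧ χ a = χ c := by
    simpa [hT, Finset.mem_filter, Finset.mem_Icc] using haT
  obtain ⟨⟨ha1, hac⟩, haχ⟩ := haT'
  have hconst : ∀ j, a ≤ j → j ≤ c → χ j = χ c := by
    intro j hj1 hj2
    have hle : χ j ≤ χ a := hmono a j ha1 hj1 (by omega)
    have hge : χ c ≤ χ j := hmono j c (by omega) hj2 hck
    rw [haχ] at hle
    linarith
  have hadm : a = 1 ∨ χ a < χ (a - 1) := by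
    rcases eq_or_lt_of_le ha1 with h | h
    · left; omega
    · right
      have hle : χ c ≤ χ (a-1) := hmono (a-1) c (by omega) (by omega) hck
      rcases lt_or_eq_of_le hle with h' | h'
      · rw [haχ]; exact h'
      · exfalso
        have hmem : (a-1) ∈ T := by
          simp only [hT, Finset.mem_filter, Finset.mem_Icc]
          exact ⟨⟨by omega, by omega⟩, h'.symm⟩
        have := T.min'_le _ hmem
        omega
  have hb := hdT a ha1 (by omega) hadm
  have hsum : ∑ j ∈ Finset.Icc a k, max (χ j) 0 = ((c + 1 - a : ℕ) : ℝ) * χ c := by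
    have hsplit : Finset.Icc a k = Finset.Icc a c ∪ Finset.Icc (c+1) k := by
      ext x; simp only [Finset.mem_Icc, Finset.mem_union]; omega
    have hdisj : Disjoint (Finset.Icc a c) (Finset.Icc (c+1) k) := by
      rw [Finset.disjoint_left]; intro x hx hy
      rw [Finset.mem_Icc] at hx hy; omega
    rw [hsplit, Finset.sum_union hdisj]
    have h1 : ∀ j ∈ Finset.Icc a c, max (χ j) 0 = χ c := by
      intro j hj; rw [Finset.mem_Icc] at hj
      rw [hconst j hj.1 hj.2]
      exact max_eq_left (le_of_lt (hpos c hc1 le_rfl))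
    have h2 : ∑ j ∈ Finset.Icc (c+1) k, max (χ j) 0 = 0 := by
      apply Finset.sum_eq_zero
      intro j hj; rw [Finset.mem_Icc] at hj
      exact max_eq_right (hnonpos j (by omega) hj.2)
    rw [Finset.sum_congr rfl h1, Finset.sum_const, h2, Nat.card_Icc, add_zero,
      nsmul_eq_mul]
  rw [hsum] at hb
  have hceq' : c = k - p := hceq
  have hkc' : c + p = k := by omega
  have hcR : (c:ℝ) = (k:ℝ) - p := by
    have : ((c:ℝ) + p) = k := by exact_mod_cast hkc'
    linarith
  set m : ℕ := c + 1 - a with hm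
  have hm1 : 1 ≤ m := by omega
  have hmR : (m:ℝ) = (c:ℝ) + 1 - a := by
    rw [hm, Nat.cast_sub (by omega)]; push_cast; ring
  have hb' : (m:ℝ) * Real.log d ≤ (m:ℝ) * (2 * χ c) := by
    rw [hmR]
    have : ((c + 1 - a : ℕ) : ℝ) = (c:ℝ) + 1 - a := hmR ▸ rfl
    rw [this] at hb
    nlinarith [hb, hcR]
  have hm0 : (0:ℝ) < m := by exact_mod_cast hm1
  have hLχ : Real.log d ≤ 2 * χ c := le_of_mul_le_mul_left hb' hm0
  have hχic : χ c ≤ χ i := hmono i c h1i hic hck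
  linarith
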